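/- Let J be a finite set, p : J → ℝ with p j ≥ 0 for all j, and let 𝒮 be a family of two-element subsets of J (the scenarios). Suppose j₀, j₁, …, j_{m} is a closed walk with j_m = j₀, m odd, and {j_l, j_{l+1}} ∈ 𝒮 for each 0 ≤ l < m. Then for every subset A ⊆ J there exists an index l with either {j_l, j_{l+1}} ⊆ A or {j_l, j_{l+1}} ∩ A = ∅; consequently, max_{S ∈ 𝒮} max(p(A ∩ S), p(S \ A)) ≥ min_{0 ≤ l < m} (p(j_l) + p(j_{l+1})). -/

import Mathlib

theorem stmt_6 {α : Type*} [DecidableEq α] (J : Finset α) (p : α → ℝ)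
    (hp : ∀ j ∈ J, 0 ≤ p j) (𝒮 : Finset (Finset α))
    (h𝒮 : ∀ S ∈ 𝒮, S.card = 2 ∧ S ⊆ J)
    (m : ℕ) (hm : Odd m) (j : ℕ → α) (hclosed : j m = j 0)
    (hwalk : ∀ l < m, ({j l, j (l + 1)} : Finset α) ∈ 𝒮)
    (A : Finset α) (hA : A ⊆ J) :
    (∃ l < m, ({j l, j (l + 1)} : Finset α) ⊆ A ∨
        ({j l, j (l + 1)} : Finset α) ∩ A = ∅) ∧
      (⨆ S ∈ 𝒮, max (∑ x ∈ A ∩ S, p x) (∑ x ∈ S \ A, p x)) ≥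
        ⨅ l : Fin m, (p (j l) + p (j (l + 1))) := by
  have hmpos : 0 < m := hm.pos
  -- Part 1: monochromatic edge exists
  have hmono : ∃ l < m, ({j l, j (l + 1)} : Finset α) ⊆ A ∨
      ({j l, j (l + 1)} : Finset α) ∩ A = ∅ := by
    by_contra hcon
    push_neg at hcon
    have key : ∀ l ≤ m, (((j l ∈ A) ↔ (j 0 ∈ A)) ↔ Even l) := by
      intro l hl
      induction l with
      | zero => simp
      | succ n ih =>
        have hn : n < m := Nat.lt_of_succ_le hl
        obtain ⟨hns, hni⟩ := hcon n hn
        have hdiff : ¬ ((j (n+1) ∈ A) ↔ (j n ∈ A)) := by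
          intro hiff
          by_cases h1 : j n ∈ A
          · exact hns (by
              intro x hx
              simp only [Finset.mem_insert, Finset.mem_singleton] at hx
              rcases hx with h | h
              · exact h ▸ h1
              · exact h ▸ (hiff.mpr h1))
          · apply Finset.nonempty_iff_ne_empty.mp hni
            ext x
            simp only [Finset.mem_inter, Finset.mem_insert, Finset.mem_singleton,
              Finset.notMem_empty, iff_false, not_and]
            rintro (rfl | rfl)
            · exact h1
            · exact fun h => h1 (hiff.mp h)
        have ihn := ih (Nat.le_of_lt hn)
        rw [Nat.even_add_one, ← ihn]
        tauto
    have := key m le_rfl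
    rw [hclosed] at this
    exact (Nat.not_even_iff_odd.mpr hm) (this.mp Iff.rfl)
  refine ⟨hmono, ?_⟩
  -- Part 2
  obtain ⟨l, hl, hcase⟩ := hmono
  set E : Finset α := {j l, j (l + 1)} with hE
  have hEmem : E ∈ 𝒮 := hwalk l hl
  have hcard : E.card = 2 := (h𝒮 E hEmem).1
  have hne : j l ≠ j (l + 1) := by
    intro h
    rw [hE, h] at hcard
    simp at hcard
  set g : Finset α → ℝ := fun S => max (∑ x ∈ A ∩ S, p x) (∑ x ∈ S \ A, p x) with hg
  have hgE : g E ≥ p (j l) + p (j (l + 1)) := by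
    have hsum : ∑ x ∈ E, p x = p (j l) + p (j (l + 1)) := Finset.sum_pair hne
    rcases hcase with hsub | hdisj
    · have : A ∩ E = E := Finset.inter_eq_right.mpr hsub
      calc p (j l) + p (j (l + 1)) = ∑ x ∈ A ∩ E, p x := by rw [this, hsum]
        _ ≤ g E := le_max_left _ _
    · have : E \ A = E := by
        rw [Finset.sdiff_eq_self_iff_disjoint, Finset.disjoint_left]
        intro a haE haA
        have : a ∈ E ∩ A := Finset.mem_inter.mpr ⟨haE, haA⟩
        simp [hdisj] at this
      calc p (j l) + p (j (l + 1)) = ∑ x ∈ E \ A, p x := by rw [this, hsum]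
        _ ≤ g E := le_max_right _ _
  -- iInf ≤ p jl + p j(l+1)
  haveI : Nonempty (Fin m) := ⟨⟨l, hl⟩⟩
  have hinf : (⨅ i : Fin m, (p (j i) + p (j (i + 1)))) ≤ p (j l) + p (j (l + 1)) := by
    have hbdd : BddBelow (Set.range fun i : Fin m => (p (j i) + p (j (i + 1)))) :=
      (Set.finite_range _).bddBelow
    exact ciInf_le hbdd ⟨l, hl⟩
  -- g E ≤ iSup
  have hsup : g E ≤ ⨆ S ∈ 𝒮, g S := by
    have hbdd : BddAbove (Set.range fun S => ⨆ (_ : S ∈ 𝒮), g S) := by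
      apply ((𝒮.image g).finite_toSet.insert (0 : ℝ)).bddAbove.mono
      rintro x ⟨S, rfl⟩
      by_cases hS : S ∈ 𝒮
      · simp only [hS, ciSup_unique]
        exact Set.mem_insert_of_mem _ (by simpa using ⟨S, hS, rfl⟩)
      · haveI : IsEmpty (S ∈ 𝒮) := ⟨hS⟩
        simp only [Real.iSup_of_isEmpty]
        exact Set.mem_insert _ _
    calc g E = ⨆ (_ : E ∈ 𝒮), g E := by rw [ciSup_pos hEmem]
      _ ≤ ⨆ S ∈ 𝒮, g S := le_ciSup hbdd E
  linarith
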